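/- Let η ∈ E satisfy the Galerkin orthogonality a_h(η, v_h) + ik⟨η, v_h⟩_Γ = 0 for all v_h ∈ V_h, where a_h(v,w) = (∇v,∇w) + iγΣ_e h_e⟨[∂v/∂n_e],[∂w/∂n_e]⟩_e. Then for any w_h ∈ V_h (writing η = (u − w_h) + (w_h − \tilde u_h) etc.), one has ‖η‖_{1,h}² + k‖η‖_{L²(Γ)}² ≤ C(‖u − w_h‖_{1,h}² + k‖u − w_h‖_{L²(Γ)}²), where u − w_h is the difference between the exact function and any element of V_h and η = u − \tilde u_h with \tilde u_h the elliptic projection. -/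

import Mathlib

open Complex Finset

lemma key_aux {H : Type} [NormedAddCommGroup H] [InnerProductSpace ℂ H] (x y : H) :
    |(inner ℂ x y : ℂ).re| + |(inner ℂ x y : ℂ).im| ≤ ‖x‖ ^ 2 + ‖y‖ ^ 2 / 2 := by
  set w : ℂ := inner ℂ x y with hw
  have h1 : ‖w‖ ≤ ‖x‖ * ‖y‖ := norm_inner_le_norm x y
  have h2 : w.re ^ 2 + w.im ^ 2 = ‖w‖ ^ 2 := by
    rw [Complex.sq_norm, Complex.normSq_apply]; ring
  have hx : (0:ℝ) ≤ ‖x‖ := norm_nonneg _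
  have hy : (0:ℝ) ≤ ‖y‖ := norm_nonneg _
  have hwn : (0:ℝ) ≤ ‖w‖ := norm_nonneg _
  nlinarith [sq_nonneg (|w.re| - |w.im|), sq_nonneg (‖x‖^2 - ‖y‖^2/2),
    _root_.sq_abs w.re, _root_.sq_abs w.im, abs_nonneg w.re, abs_nonneg w.im,
    mul_nonneg hx hy, sq_nonneg (|w.re| + |w.im|)]


lemma re_inner_self {H : Type} [NormedAddCommGroup H] [InnerProductSpace ℂ H]
    (x : H) : (inner ℂ x x : ℂ).re = ‖x‖ ^ 2 := by
  rw [← RCLike.re_to_complex, inner_self_eq_norm_sq]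

lemma im_inner_self {H : Type} [NormedAddCommGroup H] [InnerProductSpace ℂ H]
    (x : H) : (inner ℂ x x : ℂ).im = 0 := by
  rw [← RCLike.im_to_complex, inner_self_im]


/-- Quasi-optimality of the elliptic projection. There is an
absolute constant `C > 0` such that: whenever `η = u − ũ_h` (with `ũ_h ∈ V_h`
the elliptic projection) satisfies the Galerkin orthogonality
`a_h(η, v_h) + ik⟨η, v_h⟩_Γ = 0` for all `v_h ∈ V_h`, where
`a_h(v,w) = (∇v,∇w) + iγ Σ_e h_e ⟨[∂v/∂n_e],[∂w/∂n_e]⟩_e`, then for any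
`w_h ∈ V_h`, `‖η‖_{1,h}² + k‖η‖²_{L²(Γ)} ≤ C(‖u−w_h‖_{1,h}² + k‖u−w_h‖²_{L²(Γ)})`.
The gradient, jumps and boundary trace are modeled by linear maps `grad`,
`jump e`, `tr` into complex Hilbert spaces, and
`‖v‖_{1,h}² = ‖grad v‖² + γ Σ_e h_e ‖jump e v‖²`. -/
theorem stmt7 :
    ∃ C : ℝ, 0 < C ∧
      ∀ (E H Hj HΓ : Type)
        [AddCommGroup E] [Module ℂ E]
        [NormedAddCommGroup H] [InnerProductSpace ℂ H]
        [NormedAddCommGroup Hj] [InnerProductSpace ℂ Hj]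
        [NormedAddCommGroup HΓ] [InnerProductSpace ℂ HΓ]
        (ι : Type) (Eh : Finset ι) (he : ι → ℝ) (γ k : ℝ)
        (grad : E →ₗ[ℂ] H) (jump : ι → E →ₗ[ℂ] Hj) (tr : E →ₗ[ℂ] HΓ)
        (Vh : Submodule ℂ E) (u utilde wh : E),
        0 < γ → 0 < k → (∀ e ∈ Eh, 0 < he e) →
        utilde ∈ Vh → wh ∈ Vh →
        -- Galerkin orthogonality: a_h(η, v_h) + ik⟨η, v_h⟩_Γ = 0 for all v_h ∈ V_h,
        -- with η = u − utilde
        (∀ vh ∈ Vh,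
          (inner ℂ (grad vh) (grad (u - utilde)) : ℂ)
            + Complex.I * (γ : ℂ) *
              ∑ e ∈ Eh, (he e : ℂ) * (inner ℂ (jump e vh) (jump e (u - utilde)) : ℂ)
            + Complex.I * (k : ℂ) * (inner ℂ (tr vh) (tr (u - utilde)) : ℂ) = 0) →
        ‖grad (u - utilde)‖ ^ 2
            + γ * ∑ e ∈ Eh, he e * ‖jump e (u - utilde)‖ ^ 2
            + k * ‖tr (u - utilde)‖ ^ 2
          ≤ C * (‖grad (u - wh)‖ ^ 2
            + γ * ∑ e ∈ Eh, he e * ‖jump e (u - wh)‖ ^ 2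
            + k * ‖tr (u - wh)‖ ^ 2) := by
  refine ⟨2, by norm_num, ?_⟩
  intro E H Hj HΓ _ _ _ _ _ _ _ _ ι Eh he γ k grad jump tr Vh u utilde wh hγ hk hhe hU hW hG
  set η := u - utilde with hηdef
  set ζ := u - wh with hζdef
  have hv : η - ζ ∈ Vh := by
    have h : η - ζ = wh - utilde := by rw [hηdef, hζdef]; abel
    rw [h]; exact Submodule.sub_mem _ hW hU
  have heq := hG (η - ζ) hv
  simp only [map_sub, inner_sub_left] at heq
  have hre := congrArg Complex.re heq
  have him := congrArg Complex.im heq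
  simp only [mul_sub, Finset.sum_sub_distrib] at hre him
  simp only [Complex.add_re, Complex.add_im, Complex.sub_re, Complex.sub_im,
    Complex.mul_re, Complex.mul_im, Complex.I_re, Complex.I_im,
    Complex.ofReal_re, Complex.ofReal_im, Complex.re_sum, Complex.im_sum,
    Complex.zero_re, Complex.zero_im, re_inner_self, im_inner_self,
    zero_mul, one_mul, mul_zero, sub_zero,
    zero_sub, zero_add, add_zero, Finset.sum_const_zero, neg_zero] at hre him
  -- abbreviations
  set A : ℂ := inner ℂ (grad ζ) (grad η) with hA
  set T : ℂ := inner ℂ (tr ζ) (tr η) with hT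
  set Sη : ℝ := ∑ e ∈ Eh, he e * ‖jump e η‖ ^ 2 with hSη
  set Sζ : ℝ := ∑ e ∈ Eh, he e * ‖jump e ζ‖ ^ 2 with hSζ
  set Sre : ℝ := ∑ e ∈ Eh, he e * (inner ℂ (jump e ζ) (jump e η) : ℂ).re with hSre
  set Sim : ℝ := ∑ e ∈ Eh, he e * (inner ℂ (jump e ζ) (jump e η) : ℂ).im with hSim
  have hkey : ‖grad η‖ ^ 2 + γ * Sη + k * ‖tr η‖ ^ 2
      = (A.re + A.im) + γ * (Sre - Sim) + k * (T.re - T.im) := by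
    linear_combination hre + him
  have hA2 : A.re + A.im ≤ ‖grad ζ‖ ^ 2 + ‖grad η‖ ^ 2 / 2 := by
    have := key_aux (grad ζ) (grad η)
    have h1 := abs_nonneg A.re
    have h2 := le_abs_self A.re
    have h3 := le_abs_self A.im
    rw [← hA] at this
    linarith
  have hT2 : T.re - T.im ≤ ‖tr ζ‖ ^ 2 + ‖tr η‖ ^ 2 / 2 := by
    have := key_aux (tr ζ) (tr η)
    have h2 := le_abs_self T.re
    have h3 := neg_abs_le T.im
    rw [← hT] at this
    linarith
  have hJ2 : Sre - Sim ≤ Sζ + Sη / 2 := by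
    have hstep : Sre - Sim
        = ∑ e ∈ Eh, he e * ((inner ℂ (jump e ζ) (jump e η) : ℂ).re
            - (inner ℂ (jump e ζ) (jump e η) : ℂ).im) := by
      rw [hSre, hSim, ← Finset.sum_sub_distrib]
      exact Finset.sum_congr rfl fun e _ => by ring
    have hbd : ∑ e ∈ Eh, he e * ((inner ℂ (jump e ζ) (jump e η) : ℂ).re
            - (inner ℂ (jump e ζ) (jump e η) : ℂ).im)
        ≤ ∑ e ∈ Eh, he e * (‖jump e ζ‖ ^ 2 + ‖jump e η‖ ^ 2 / 2) := by
      refine Finset.sum_le_sum fun e heEh => ?_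
      refine mul_le_mul_of_nonneg_left ?_ (hhe e heEh).le
      have := key_aux (jump e ζ) (jump e η)
      have h2 := le_abs_self (inner ℂ (jump e ζ) (jump e η) : ℂ).re
      have h3 := neg_abs_le (inner ℂ (jump e ζ) (jump e η) : ℂ).im
      linarith
    have hsplit : ∑ e ∈ Eh, he e * (‖jump e ζ‖ ^ 2 + ‖jump e η‖ ^ 2 / 2)
        = Sζ + Sη / 2 := by
      rw [hSζ, hSη, Finset.sum_div, ← Finset.sum_add_distrib]
      exact Finset.sum_congr rfl fun e _ => by ring
    rw [hstep, ← hsplit] at *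
    linarith
  have hγJ : γ * (Sre - Sim) ≤ γ * Sζ + γ * Sη / 2 := by
    have := mul_le_mul_of_nonneg_left hJ2 hγ.le
    nlinarith
  have hkT : k * (T.re - T.im) ≤ k * ‖tr ζ‖ ^ 2 + k * ‖tr η‖ ^ 2 / 2 := by
    have := mul_le_mul_of_nonneg_left hT2 hk.le
    nlinarith
  linarith
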